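/- Let k ∈ {3,4} and let Γ be a finite connected k-valent simple graph whose full automorphism group acts transitively on the arcs of Γ. Suppose Γ admits a non-identity automorphism g with fpr_{VΓ}(g) > 1/3 such that g fixes no arc of Γ, i.e. there is no pair of adjacent vertices u, w with u^g = u and w^g = w. Then either k = 4 and Γ is isomorphic to the Praeger–Xu graph C(r,1) for some r ≥ 3, or k = 3 and Γ is isomorphic to the complete bipartite graph K_{3,3}. -/

import Mathlib

open SimpleGraph

noncomputable def fpr {V : Type*} (g : V → V) : ℚ :=
  (Nat.card {v : V // g v = v} : ℚ) / (Nat.card V : ℚ)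

/-- The Praeger–Xu graph `C(r,s)`. -/
def praegerXu (r s : ℕ) : SimpleGraph (ZMod r × (Fin s → ZMod 2)) :=
  SimpleGraph.fromRel (fun a b =>
    b.1 = a.1 + 1 ∧ ∀ (i : Fin s) (h : (i : ℕ) + 1 < s), b.2 i = a.2 ⟨(i : ℕ) + 1, h⟩)

/-- The Split Praeger–Xu graph `S(C(r,s))`; `1` plays the role of `+`, `0` of `−`. -/
def splitPraegerXu (r s : ℕ) : SimpleGraph ((ZMod r × (Fin s → ZMod 2)) × Fin 2) :=
  SimpleGraph.fromRel (fun a b => a.2 = 1 ∧ b.2 = 0 ∧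
    (a.1 = b.1 ∨ (b.1.1 = a.1.1 + 1 ∧
      ∀ (i : Fin s) (h : (i : ℕ) + 1 < s), b.1.2 i = a.1.2 ⟨(i : ℕ) + 1, h⟩)))

def VertexTransitive {V : Type*} (Γ : SimpleGraph V) : Prop :=
  ∀ u v : V, ∃ e : Γ ≃g Γ, e u = v

def EdgeTransitive {V : Type*} (Γ : SimpleGraph V) : Prop :=
  ∀ u v u' v' : V, Γ.Adj u v → Γ.Adj u' v' →
    ∃ e : Γ ≃g Γ, (e u = u' ∧ e v = v') ∨ (e u = v' ∧ e v = u')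

def ArcTransitive {V : Type*} (Γ : SimpleGraph V) : Prop :=
  ∀ u v u' v' : V, Γ.Adj u v → Γ.Adj u' v' → ∃ e : Γ ≃g Γ, e u = u' ∧ e v = v'

-- exceptional graphs
def Psi1 : SimpleGraph (Fin 5) := ⊤

def Psi2 : SimpleGraph (Fin 5 × Fin 2) :=
  SimpleGraph.fromRel (fun a b => a.2 ≠ b.2 ∧ a.1 ≠ b.1)

def Psi3 : SimpleGraph ({v : Fin 3 → ZMod 2 // v ≠ 0} × Fin 2) :=
  SimpleGraph.fromRel (fun a b => a.2 ≠ b.2 ∧ ∑ i, a.1.1 i * b.1.1 i ≠ 0)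

instance : Fact (Nat.Prime 3) := ⟨by norm_num⟩

def Psi4 : SimpleGraph (Projectivization (ZMod 3) (Fin 3 → ZMod 3) × Fin 2) :=
  SimpleGraph.fromRel (fun a b => a.2 ≠ b.2 ∧ ∑ i, a.1.rep i * b.1.rep i = 0)

def kneser (n k : ℕ) : SimpleGraph {s : Finset (Fin n) // s.card = k} :=
  SimpleGraph.fromRel (fun a b => Disjoint a.1 b.1)

def Psi5 : SimpleGraph {s : Finset (Fin 7) // s.card = 3} := kneser 7 3

def doubleCover {V : Type*} (G : SimpleGraph V) : SimpleGraph (V × Fin 2) :=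
  SimpleGraph.fromRel (fun a b => a.2 ≠ b.2 ∧ G.Adj a.1 b.1)

def Psi6 := doubleCover Psi5

def Lambda1 : SimpleGraph (Fin 4) := ⊤
def Lambda2 : SimpleGraph (Fin 3 ⊕ Fin 3) := completeBipartiteGraph (Fin 3) (Fin 3)
def cubeGraph : SimpleGraph (Fin 3 → ZMod 2) :=
  SimpleGraph.fromRel (fun a b => (Finset.univ.filter fun i => a i ≠ b i).card = 1)
def Lambda3 := cubeGraph
def Lambda4 : SimpleGraph {s : Finset (Fin 5) // s.card = 2} := kneser 5 2
def Lambda5 : SimpleGraph ({v : Fin 3 → ZMod 2 // v ≠ 0} × Fin 2) :=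
  SimpleGraph.fromRel (fun a b => a.2 ≠ b.2 ∧ ∑ i, a.1.1 i * b.1.1 i = 0)
def Lambda6 := doubleCover Lambda4

-- tau, rho, sigma
def tauFun (r s : ℕ) (i : ZMod r) :
    ZMod r × (Fin s → ZMod 2) → ZMod r × (Fin s → ZMod 2) :=
  fun a => (a.1, fun j => if a.1 + ((j : ℕ) : ZMod r) = i then a.2 j + 1 else a.2 j)

lemma tauFun_involutive (r s : ℕ) (i : ZMod r) : Function.Involutive (tauFun r s i) := by
  intro a
  unfold tauFun
  refine Prod.ext rfl ?_
  funext j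
  by_cases h : a.1 + ((j : ℕ) : ZMod r) = i
  · simp only [h, if_pos]
    rw [add_assoc, show (1 : ZMod 2) + 1 = 0 from rfl, add_zero]
  · simp [h]

/-- The permutation `τ_i` of the vertices of `C(r,s)`. -/
def tauPerm (r s : ℕ) (i : ZMod r) : Equiv.Perm (ZMod r × (Fin s → ZMod 2)) :=
  (tauFun_involutive r s i).toPerm

def rhoPerm (r s : ℕ) : Equiv.Perm (ZMod r × (Fin s → ZMod 2)) :=
  (Equiv.addRight (1 : ZMod r)).prodCongr (Equiv.refl _)

def sigmaFun (r s : ℕ) :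
    ZMod r × (Fin s → ZMod 2) → ZMod r × (Fin s → ZMod 2) :=
  fun a => (1 - (s : ZMod r) - a.1, fun j => a.2 j.rev)

lemma sigmaFun_involutive (r s : ℕ) : Function.Involutive (sigmaFun r s) := by
  intro a
  unfold sigmaFun
  refine Prod.ext ?_ ?_
  · simp only
    ring
  · funext j
    simp [Fin.rev_rev]

def sigmaPerm (r s : ℕ) : Equiv.Perm (ZMod r × (Fin s → ZMod 2)) :=
  (sigmaFun_involutive r s).toPerm

/-- The group `K = ⟨τ_i : i ∈ ZMod r⟩`. -/
def pxK (r s : ℕ) : Subgroup (Equiv.Perm (ZMod r × (Fin s → ZMod 2))) :=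
  Subgroup.closure (Set.range (tauPerm r s))

/-- The group `H = ⟨K, ρ, σ⟩`. -/
def pxH (r s : ℕ) : Subgroup (Equiv.Perm (ZMod r × (Fin s → ZMod 2))) :=
  Subgroup.closure (Set.range (tauPerm r s) ∪ {rhoPerm r s, sigmaPerm r s})

/-- Quotient graph of `Γ` by the orbits of a group action. -/
def quotGraph {V : Type*} (G : Type*) [Group G] [MulAction G V] (Γ : SimpleGraph V) :
    SimpleGraph (MulAction.orbitRel.Quotient G V) :=
  SimpleGraph.fromRel (fun a b => ∃ u v : V,
    (Quotient.mk (MulAction.orbitRel G V) u : MulAction.orbitRel.Quotient G V) = a ∧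
    (Quotient.mk (MulAction.orbitRel G V) v : MulAction.orbitRel.Quotient G V) = b ∧
    Γ.Adj u v)

open SimpleGraph

private lemma iso_image_nbhd {V : Type*} {Γ : SimpleGraph V} (e : Γ ≃g Γ) (x : V) :
    (fun v => e v) '' Γ.neighborSet x = Γ.neighborSet (e x) := by
  ext z
  constructor
  · rintro ⟨y, hy, rfl⟩
    exact e.map_rel_iff.mpr hy
  · intro hz
    refine ⟨e.symm z, ?_, by simp⟩
    have : Γ.Adj (e x) (e (e.symm z)) := by simpa using hz
    exact e.map_rel_iff.mp this

private def ncls {V : Type*} (Γ : SimpleGraph V) (x : V) : Set V :=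
  {y | Γ.neighborSet y = Γ.neighborSet x}

private lemma mem_ncls {V : Type*} (Γ : SimpleGraph V) (x y : V) :
    y ∈ ncls Γ x ↔ Γ.neighborSet y = Γ.neighborSet x := Iff.rfl

private lemma ncls_self {V : Type*} (Γ : SimpleGraph V) (x : V) : x ∈ ncls Γ x := rfl

private lemma ncls_eq_of_mem {V : Type*} {Γ : SimpleGraph V} {x y : V} (h : y ∈ ncls Γ x) :
    ncls Γ y = ncls Γ x := by
  ext z
  simp only [mem_ncls]
  rw [h]

private lemma ncls_eq_of_common {V : Type*} {Γ : SimpleGraph V} {x y z : V}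
    (hx : z ∈ ncls Γ x) (hy : z ∈ ncls Γ y) : ncls Γ x = ncls Γ y := by
  rw [← ncls_eq_of_mem hx, ← ncls_eq_of_mem hy]

private lemma not_adj_ncls {V : Type*} {Γ : SimpleGraph V} {x y : V} (h : y ∈ ncls Γ x) :
    ¬ Γ.Adj x y := by
  intro hadj
  have : x ∈ Γ.neighborSet y := hadj.symm
  rw [mem_ncls] at h
  rw [h] at this
  exact Γ.irrefl this

private lemma ncls_subset_nbhd {V : Type*} {Γ : SimpleGraph V} {x y : V} (h : Γ.Adj x y) :
    ncls Γ y ⊆ Γ.neighborSet x := by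
  intro z hz
  rw [mem_ncls] at hz
  have : x ∈ Γ.neighborSet z := by rw [hz]; exact h.symm
  exact this.symm

/-- closure under adjacency + connectivity gives everything -/
private lemma closure_eq_univ {V : Type*} {Γ : SimpleGraph V} (hconn : Γ.Connected)
    {S : Set V} {x0 : V} (hx0 : x0 ∈ S)
    (hcl : ∀ x y, x ∈ S → Γ.Adj x y → y ∈ S) (v : V) : v ∈ S := by
  obtain ⟨w⟩ := hconn x0 v
  clear hconn
  induction w with
  | nil => exact hx0
  | cons h p ih => exact ih (hcl _ _ hx0 h)

private lemma vt_of_at {V : Type*} {k : ℕ} (hk : k ≠ 0) {Γ : SimpleGraph V}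
    (hval : ∀ v : V, Nat.card (Γ.neighborSet v) = k) (hat : ArcTransitive Γ) :
    VertexTransitive Γ := by
  intro u v
  have hne : ∀ w : V, (Γ.neighborSet w).Nonempty := by
    intro w
    rw [Set.nonempty_iff_ne_empty]
    intro h
    have := hval w
    rw [h] at this
    simp at this
    exact hk this.symm
  obtain ⟨u1, hu1⟩ := hne u
  obtain ⟨v1, hv1⟩ := hne v
  obtain ⟨e, he, -⟩ := hat u u1 v v1 hu1 hv1
  exact ⟨e, he⟩
/-- If two distinct `g`-fixed vertices have three distinct common neighbours,
their neighbourhoods coincide (valency `k ≤ 4`, no fixed arc). -/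
private lemma twin_of_three_common {V : Type*} [Fintype V] {k : ℕ} (hk4 : k ≤ 4)
    {Γ : SimpleGraph V} (hval : ∀ v : V, (Γ.neighborSet v).ncard = k)
    (g : Γ ≃g Γ) (hno : ∀ u w : V, Γ.Adj u w → ¬(g u = u ∧ g w = w))
    {v1 v2 z1 z2 z3 : V} (hv1 : g v1 = v1) (hv2 : g v2 = v2)
    (h12 : z1 ≠ z2) (h13 : z1 ≠ z3) (h23 : z2 ≠ z3)
    (ha1 : Γ.Adj v1 z1) (ha2 : Γ.Adj v1 z2) (ha3 : Γ.Adj v1 z3)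
    (hb1 : Γ.Adj v2 z1) (hb2 : Γ.Adj v2 z2) (hb3 : Γ.Adj v2 z3) :
    Γ.neighborSet v1 = Γ.neighborSet v2 := by
  have himg : ∀ v : V, g v = v → (fun x => g x) '' Γ.neighborSet v = Γ.neighborSet v := by
    intro v hv
    rw [iso_image_nbhd g v, hv]
  set D : Set V := Γ.neighborSet v1 \ Γ.neighborSet v2 with hD
  have hDfin : D.Finite := Set.toFinite _
  have hsub : ({z1, z2, z3} : Set V) ⊆ Γ.neighborSet v1 ∩ Γ.neighborSet v2 := by
    intro z hz
    rcases hz with rfl | rfl | rfl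
    · exact ⟨ha1, hb1⟩
    · exact ⟨ha2, hb2⟩
    · exact ⟨ha3, hb3⟩
  have h3 : 3 ≤ (Γ.neighborSet v1 ∩ Γ.neighborSet v2).ncard := by
    have : ({z1, z2, z3} : Set V).ncard = 3 := by
      rw [Set.ncard_insert_of_notMem (by simp [h12, h13]) (Set.toFinite _),
        Set.ncard_insert_of_notMem (by simp [h23]) (Set.toFinite _), Set.ncard_singleton]
    rw [← this]
    exact Set.ncard_le_ncard hsub (Set.toFinite _)
  have hcardD : D.ncard ≤ 1 := by
    have := Set.ncard_inter_add_ncard_diff_eq_ncard (Γ.neighborSet v1) (Γ.neighborSet v2)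
      (Set.toFinite _)
    rw [hval v1, ← hD] at this
    omega
  have hgD : ∀ d ∈ D, g d ∈ D := by
    intro d hd
    constructor
    · have := himg v1 hv1
      rw [← this]
      exact ⟨d, hd.1, rfl⟩
    · intro hmem
      apply hd.2
      have := himg v2 hv2
      rw [← this] at hmem
      obtain ⟨d', hd', hdd⟩ := hmem
      have : d' = d := g.injective hdd
      rwa [this] at hd'
  have hDempty : D = ∅ := by
    by_contra hne
    obtain ⟨d, hd⟩ := Set.nonempty_iff_ne_empty.mpr hne
    have hgd : g d = d := by
      obtain (h | ⟨a, ha⟩) := (Set.ncard_le_one_iff_eq hDfin).mp hcardD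
      · rw [h] at hd; exact absurd hd (Set.notMem_empty d)
      · have h1 : d = a := by rw [ha] at hd; exact hd
        have h2 : g d = a := by have := hgD d hd; rw [ha] at this; exact this
        rw [h2]; exact h1.symm
    exact hno v1 d hd.1 ⟨hv1, hgd⟩
  have hsub12 : Γ.neighborSet v1 ⊆ Γ.neighborSet v2 := by
    rwa [Set.diff_eq_empty] at hDempty
  exact Set.eq_of_subset_of_ncard_le hsub12 (by rw [hval v1, hval v2]) (Set.toFinite _)
private lemma g_adj_fixed {V : Type*} {Γ : SimpleGraph V} (g : Γ ≃g Γ) {v b : V}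
    (hv : g v = v) (h : Γ.Adj v b) : Γ.Adj v (g b) := by
  have : Γ.Adj (g v) (g b) := g.map_rel_iff.mpr h
  rwa [hv] at this

private lemma stepA3 {V : Type*} [Fintype V]
    {Γ : SimpleGraph V} (hval : ∀ v : V, (Γ.neighborSet v).ncard = 3)
    (g : Γ ≃g Γ) (hno : ∀ u w : V, Γ.Adj u w → ¬(g u = u ∧ g w = w))
    (hnt : ∀ x y : V, x ≠ y → Γ.neighborSet x ≠ Γ.neighborSet y)
    {v1 v2 b : V} (hv1 : g v1 = v1) (hv2 : g v2 = v2) (h12 : v1 ≠ v2)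
    (hb1 : Γ.Adj v1 b) (hb2 : Γ.Adj v2 b) : False := by
  have hbfix : g b ≠ b := fun h => hno v1 b hb1 ⟨hv1, h⟩
  have hgb1 : Γ.Adj v1 (g b) := g_adj_fixed g hv1 hb1
  have hgb2 : Γ.Adj v2 (g b) := g_adj_fixed g hv2 hb2
  have hggb1 : Γ.Adj v1 (g (g b)) := g_adj_fixed g hv1 hgb1
  have hggb2 : Γ.Adj v2 (g (g b)) := g_adj_fixed g hv2 hgb2
  have hgbggb : g b ≠ g (g b) := fun h => hbfix (g.injective h).symm
  have hbggb : b ≠ g (g b) := by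
    intro hbb
    -- N v1 = {b, g b, c}
    have hsub : ({b, g b} : Set V) ⊆ Γ.neighborSet v1 := by
      intro z hz; rcases hz with rfl | rfl
      · exact hb1
      · exact hgb1
    have hlt : ({b, g b} : Set V).ncard < (Γ.neighborSet v1).ncard := by
      rw [hval, Set.ncard_pair hbfix.symm]  -- hbfix.symm? need b ≠ g b
      omega
    obtain ⟨c, hc, hcn⟩ := Set.exists_of_ssubset (HasSubset.Subset.ssubset_of_ne hsub
      (fun h => by rw [← h] at hlt; exact lt_irrefl _ hlt))
    have hcb : c ≠ b := fun h => hcn (by simp [h])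
    have hcgb : c ≠ g b := fun h => hcn (by simp [h])
    have heq : ({b, g b, c} : Set V) = Γ.neighborSet v1 := by
      apply Set.eq_of_subset_of_ncard_le
      · intro z hz; rcases hz with rfl | rfl | rfl
        · exact hb1
        · exact hgb1
        · exact hc
      · rw [hval]
        rw [Set.ncard_insert_of_notMem (by simp [hbfix.symm, hcb.symm]) (Set.toFinite _),
          Set.ncard_pair hcgb.symm]  -- {g b, c}
      · exact Set.toFinite _
    have hgc : g c ∈ ({b, g b, c} : Set V) := by
      rw [heq]; exact g_adj_fixed g hv1 hc
    rcases hgc with h | h | h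
    · -- g c = b, and g (g b) = b, so c = g b
      exact hcgb (g.injective (h.trans hbb))
    · exact hcb (g.injective h)
    · exact hno v1 c hc ⟨hv1, h⟩
  exact hnt v1 v2 h12 (twin_of_three_common (by norm_num) hval g hno hv1 hv2
    (Ne.symm hbfix) hbggb hgbggb hb1 hgb1 hggb1 hb2 hgb2 hggb2)
private lemma stepA4 {V : Type*} [Fintype V]
    {Γ : SimpleGraph V} (hval : ∀ v : V, (Γ.neighborSet v).ncard = 4)
    (hat : ArcTransitive Γ) (g : Γ ≃g Γ)
    (hno : ∀ u w : V, Γ.Adj u w → ¬(g u = u ∧ g w = w))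
    (hnt : ∀ x y : V, x ≠ y → Γ.neighborSet x ≠ Γ.neighborSet y)
    {v1 v2 v3 b : V} (hv1 : g v1 = v1) (hv2 : g v2 = v2) (hv3 : g v3 = v3)
    (h12 : v1 ≠ v2) (h13 : v1 ≠ v3) (h23 : v2 ≠ v3)
    (hb1 : Γ.Adj v1 b) (hb2 : Γ.Adj v2 b) (hb3 : Γ.Adj v3 b) : False := by
  have hbfix : g b ≠ b := fun h => hno v1 b hb1 ⟨hv1, h⟩
  have hgb1 : Γ.Adj v1 (g b) := g_adj_fixed g hv1 hb1
  have hgb2 : Γ.Adj v2 (g b) := g_adj_fixed g hv2 hb2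
  have hgb3 : Γ.Adj v3 (g b) := g_adj_fixed g hv3 hb3
  by_cases hbb : g (g b) = b
  case neg =>
    exact hnt v1 v2 h12 (twin_of_three_common (by norm_num) hval g hno hv1 hv2
      (Ne.symm hbfix) (fun h => hbb h.symm) (fun h => hbfix (g.injective h).symm)
      hb1 hgb1 (g_adj_fixed g hv1 hgb1) hb2 hgb2 (g_adj_fixed g hv2 hgb2))
  case pos =>
  -- enumerate N b = {v1, v2, v3, w}
  have hsub : ({v1, v2, v3} : Set V) ⊆ Γ.neighborSet b := by
    intro z hz; rcases hz with rfl | rfl | rfl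
    · exact hb1.symm
    · exact hb2.symm
    · exact hb3.symm
  have hc3 : ({v1, v2, v3} : Set V).ncard = 3 := by
    rw [Set.ncard_insert_of_notMem (by simp [h12, h13]) (Set.toFinite _),
      Set.ncard_pair h23]
  obtain ⟨w, hwN, hwv⟩ := Set.exists_of_ssubset (HasSubset.Subset.ssubset_of_ne hsub
    (fun h => by have h4 := hval b; rw [← h, hc3] at h4; omega))
  have hwv1 : w ≠ v1 := fun h => hwv (by simp [h])
  have hwv2 : w ≠ v2 := fun h => hwv (by simp [h])
  have hwv3 : w ≠ v3 := fun h => hwv (by simp [h])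
  have hNb : ({v1, v2, v3, w} : Set V) = Γ.neighborSet b := by
    apply Set.eq_of_subset_of_ncard_le
    · intro z hz; rcases hz with rfl | rfl | rfl | rfl
      · exact hb1.symm
      · exact hb2.symm
      · exact hb3.symm
      · exact hwN
    · rw [hval]
      rw [Set.ncard_insert_of_notMem (by simp [h12, h13, hwv1.symm]) (Set.toFinite _),
        Set.ncard_insert_of_notMem (by simp [h23, hwv2.symm]) (Set.toFinite _),
        Set.ncard_pair (Ne.symm hwv3)]
    · exact Set.toFinite _
  by_cases hwfix : g w = w
  case pos =>
    refine hnt b (g b) (Ne.symm hbfix) ?_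
    have : Γ.neighborSet (g b) = (fun x => g x) '' Γ.neighborSet b := (iso_image_nbhd g b).symm
    rw [← hNb] at this ⊢
    rw [this]
    simp only [Set.image_insert_eq, Set.image_singleton, hv1, hv2, hv3, hwfix]
  case neg =>
  -- Step 1 : b is not adjacent to g b
  have hbgb : ¬ Γ.Adj b (g b) := by
    intro hadj
    obtain ⟨e, heb, hegb⟩ := hat b (g b) v1 b hadj hb1
    have hmem : ∀ u : V, g u = u → Γ.Adj u b → e u ∈ ({v1, v2, v3, w} : Set V) := by
      intro u hu hub
      rw [hNb]
      have : Γ.Adj (e u) (e (g b)) := e.map_rel_iff.mpr (g_adj_fixed g hu hub)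
      rw [hegb] at this
      exact this.symm
    have hadjv1 : ∀ u : V, Γ.Adj u b → Γ.Adj (e u) v1 := by
      intro u hub
      have : Γ.Adj (e u) (e b) := e.map_rel_iff.mpr hub
      rwa [heb] at this
    have hw2 : e v2 = w := by
      rcases hmem v2 hv2 hb2 with h | h | h | h
      · exact absurd (h ▸ hadjv1 v2 hb2) (Γ.irrefl)
      · exact absurd ⟨hv2, hv1⟩ (hno v2 v1 (h ▸ hadjv1 v2 hb2))
      · exact absurd ⟨hv3, hv1⟩ (hno v3 v1 (h ▸ hadjv1 v2 hb2))
      · exact h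
    have hw3 : e v3 = w := by
      rcases hmem v3 hv3 hb3 with h | h | h | h
      · exact absurd (h ▸ hadjv1 v3 hb3) (Γ.irrefl)
      · exact absurd ⟨hv2, hv1⟩ (hno v2 v1 (h ▸ hadjv1 v3 hb3))
      · exact absurd ⟨hv3, hv1⟩ (hno v3 v1 (h ▸ hadjv1 v3 hb3))
      · exact h
    exact h23 (e.injective (hw2.trans hw3.symm))
  -- Step 2 : w is not adjacent to g b
  have hwgb : ¬ Γ.Adj w (g b) := by
    intro hadj
    have h1 : Γ.Adj (g.symm w) (g.symm (g b)) := g.symm.map_rel_iff.mpr hadj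
    have h2 : (g.symm (g b) : V) = b := by
      exact g.toEquiv.symm_apply_apply b
    rw [h2] at h1
    have : (g.symm w : V) ∈ ({v1, v2, v3, w} : Set V) := by rw [hNb]; exact h1.symm
    have happ : ∀ u : V, g u = u → (g.symm w : V) = u → w = u := by
      intro u hu heq
      have hh : w = g u := by rw [← heq]; exact (g.toEquiv.apply_symm_apply w).symm
      rwa [hu] at hh
    rcases this with h | h | h | h
    · exact hwv1 (happ v1 hv1 h)
    · exact hwv2 (happ v2 hv2 h)
    · exact hwv3 (happ v3 hv3 h)
    · refine hwfix ?_
      have hh := congrArg (fun z => (g z : V)) h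
      simp only [RelIso.apply_symm_apply] at hh
      exact hh.symm
  -- transport of the "distant vertex with three common neighbours" configuration
  have trans : ∀ u : V, Γ.Adj u b → ∃ y zz1 zz2 : V,
      Γ.Adj b y ∧ ¬Γ.Adj u y ∧ y ≠ u ∧ zz1 ≠ zz2 ∧ zz1 ≠ b ∧ zz2 ≠ b ∧
      Γ.Adj u zz1 ∧ Γ.Adj u zz2 ∧ Γ.Adj y zz1 ∧ Γ.Adj y zz2 := by
    intro u hu
    obtain ⟨e, heb, hev1⟩ := hat b v1 u b hb1.symm hu
    refine ⟨e (g b), e v2, e v3, ?_, ?_, ?_, ?_, ?_, ?_, ?_, ?_, ?_, ?_⟩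
    · have h := e.map_rel_iff.mpr hgb1.symm
      rw [hev1] at h
      exact h.symm
    · intro hadj
      rw [← heb] at hadj
      exact hbgb (e.map_rel_iff.mp hadj)
    · intro heq
      rw [← heb] at heq
      exact hbfix (e.injective heq)
    · exact fun h => h23 (e.injective h)
    · intro h; rw [← hev1] at h; exact h12.symm (e.injective h)
    · intro h; rw [← hev1] at h; exact h13.symm (e.injective h)
    · have := e.map_rel_iff.mpr hb2.symm
      rwa [heb] at this
    · have := e.map_rel_iff.mpr hb3.symm
      rwa [heb] at this
    · exact e.map_rel_iff.mpr hgb2.symm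
    · exact e.map_rel_iff.mpr hgb3.symm
  -- from arcs into v1 and v2
  have useT : ∀ s : V, s ≠ b → s ≠ g b → Γ.Adj v1 s → Γ.Adj v2 s → False := by
    intro s hs1 hs2 ha hb'
    exact hnt v1 v2 h12 (twin_of_three_common (by norm_num) hval g hno hv1 hv2
      (Ne.symm hbfix) (Ne.symm hs1) (Ne.symm hs2) hb1 hgb1 ha hb2 hgb2 hb')
  have K : ∀ u : V, g u = u → Γ.Adj u b → (u = v1 ∨ u = v2 ∨ u = v3) →
      (∃ zz1 zz2 : V, zz1 ≠ zz2 ∧ zz1 ≠ b ∧ zz2 ≠ b ∧ zz1 ≠ g b ∧ zz2 ≠ g b ∧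
        Γ.Adj u zz1 ∧ Γ.Adj u zz2 ∧ Γ.Adj w zz1 ∧ Γ.Adj w zz2) ∨
      (∃ u' : V, g u' = u' ∧ u ≠ u' ∧ ∃ zz1 zz2 : V, zz1 ≠ zz2 ∧ zz1 ≠ b ∧ zz2 ≠ b ∧
        Γ.Adj u zz1 ∧ Γ.Adj u zz2 ∧ Γ.Adj u' zz1 ∧ Γ.Adj u' zz2 ∧ Γ.Adj u' b) := by
    intro u hufix hub huv
    obtain ⟨y, zz1, zz2, hby, hnuy, hyu, hz12, hz1b, hz2b, huz1, huz2, hyz1, hyz2⟩ := trans u hub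
    have hymem : y ∈ ({v1, v2, v3, w} : Set V) := by rw [hNb]; exact hby
    have hyv : ∀ vi : V, g vi = vi → y = vi → u ≠ vi →
        (∃ u' : V, g u' = u' ∧ u ≠ u' ∧ ∃ zz1 zz2 : V, zz1 ≠ zz2 ∧ zz1 ≠ b ∧ zz2 ≠ b ∧
        Γ.Adj u zz1 ∧ Γ.Adj u zz2 ∧ Γ.Adj u' zz1 ∧ Γ.Adj u' zz2 ∧ Γ.Adj u' b) := by
      intro vi hvi hyvi huvi
      subst hyvi
      exact ⟨y, hvi, huvi, zz1, zz2, hz12, hz1b, hz2b, huz1, huz2, hyz1, hyz2, hby.symm⟩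
    rcases hymem with h | h | h | h
    · rcases huv with rfl | rfl | rfl
      · exact absurd h hyu
      · exact Or.inr (hyv v1 hv1 h (Ne.symm h12))
      · exact Or.inr (hyv v1 hv1 h (Ne.symm h13))
    · rcases huv with rfl | rfl | rfl
      · exact Or.inr (hyv v2 hv2 h h12)
      · exact absurd h hyu
      · exact Or.inr (hyv v2 hv2 h (Ne.symm h23))
    · rcases huv with rfl | rfl | rfl
      · exact Or.inr (hyv v3 hv3 h h13)
      · exact Or.inr (hyv v3 hv3 h h23)
      · exact absurd h hyu
    · subst h
      refine Or.inl ⟨zz1, zz2, hz12, hz1b, hz2b, ?_, ?_, huz1, huz2, hyz1, hyz2⟩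
      · intro hzz; rw [hzz] at hyz1; exact hwgb hyz1
      · intro hzz; rw [hzz] at hyz2; exact hwgb hyz2
  have useT2 : ∀ u u' : V, g u = u → g u' = u' → u ≠ u' →
      (∃ zz1 zz2 : V, zz1 ≠ zz2 ∧ zz1 ≠ b ∧ zz2 ≠ b ∧
        Γ.Adj u zz1 ∧ Γ.Adj u zz2 ∧ Γ.Adj u' zz1 ∧ Γ.Adj u' zz2 ∧ Γ.Adj u' b) →
      Γ.Adj u b → False := by
    intro u u' hufix hu'fix hneq hex hub
    obtain ⟨zz1, zz2, hz12, hz1b, hz2b, ha1, ha2, ha1', ha2', hu'b⟩ := hex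
    exact hnt u u' hneq (twin_of_three_common (by norm_num) hval g hno hufix hu'fix
      (Ne.symm hz1b) (Ne.symm hz2b) hz12 hub ha1 ha2 hu'b ha1' ha2')
  rcases K v1 hv1 hb1 (Or.inl rfl) with
    ⟨zz1, zz2, hz12, hz1b, hz2b, hz1gb, hz2gb, ha1, ha2, hwz1, hwz2⟩ | h
  case inr =>
    obtain ⟨u', h1, h2, h3⟩ := h
    exact useT2 v1 u' hv1 h1 h2 h3 hb1
  rcases K v2 hv2 hb2 (Or.inr (Or.inl rfl)) with
    ⟨yy1, yy2, hy12, hy1b, hy2b, hy1gb, hy2gb, hc1, hc2, hwy1, hwy2⟩ | h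
  case inr =>
    obtain ⟨u', h1, h2, h3⟩ := h
    exact useT2 v2 u' hv2 h1 h2 h3 hb2
  have hover : zz1 = yy1 ∨ zz1 = yy2 ∨ zz2 = yy1 ∨ zz2 = yy2 := by
    by_contra hno5
    push_neg at hno5
    obtain ⟨e11, e12, e21, e22⟩ := hno5
    have hsub5 : ({zz1, zz2, yy1, yy2, b} : Set V) ⊆ Γ.neighborSet w := by
      intro z hz
      rcases hz with rfl | rfl | rfl | rfl | rfl
      · exact hwz1
      · exact hwz2
      · exact hwy1
      · exact hwy2
      · exact hwN.symm
    have hc5 : ({zz1, zz2, yy1, yy2, b} : Set V).ncard = 5 := by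
      rw [Set.ncard_insert_of_notMem (by simp [hz12, e11, e12, hz1b]) (Set.toFinite _),
        Set.ncard_insert_of_notMem (by simp [e21, e22, hz2b]) (Set.toFinite _),
        Set.ncard_insert_of_notMem (by simp [hy12, hy1b]) (Set.toFinite _),
        Set.ncard_pair hy2b]
    have := Set.ncard_le_ncard hsub5 (Set.toFinite _)
    rw [hc5, hval w] at this
    omega
  rcases hover with h | h | h | h
  · subst h; exact useT zz1 hz1b hz1gb ha1 hc1
  · subst h; exact useT zz1 hz1b hz1gb ha1 hc2
  · subst h; exact useT zz2 hz2b hz2gb ha2 hc1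
  · subst h; exact useT zz2 hz2b hz2gb ha2 hc2
private lemma twins_exist {V : Type*} [Fintype V] {k : ℕ} (hk : k = 3 ∨ k = 4)
    {Γ : SimpleGraph V} (hval : ∀ v : V, (Γ.neighborSet v).ncard = k)
    (hat : ArcTransitive Γ) (g : Γ ≃g Γ)
    (hfpr : Fintype.card V < 3 * Nat.card {v : V // g v = v})
    (hno : ∀ u w : V, Γ.Adj u w → ¬(g u = u ∧ g w = w)) :
    ∃ x y : V, x ≠ y ∧ Γ.neighborSet x = Γ.neighborSet y := by
  classical
  by_contra hnt'
  push_neg at hnt'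
  have hnt : ∀ x y : V, x ≠ y → Γ.neighborSet x ≠ Γ.neighborSet y := hnt'
  set F : Finset V := Finset.univ.filter (fun v : V => g v = v) with hFdef
  have hfpr' : Fintype.card V < 3 * F.card := by
    rwa [Nat.card_eq_fintype_card, Fintype.card_subtype] at hfpr
  have hmemF : ∀ v : V, v ∈ F ↔ g v = v := by
    intro v; simp [hFdef]
  have hmemFc : ∀ v : V, v ∈ Fᶜ ↔ ¬ g v = v := by
    intro v; simp [hFdef]
  -- every non-fixed vertex has at most k - 2 fixed neighbours
  have hdb : ∀ b : V, ¬ g b = b →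
      ((Γ.neighborFinset b).filter (fun v : V => g v = v)).card ≤ k - 2 := by
    intro b hb
    by_contra hbig
    push_neg at hbig
    rcases hk with rfl | rfl
    · -- k = 3 : at least two distinct fixed neighbours
      have h2 : 1 < ((Γ.neighborFinset b).filter (fun v : V => g v = v)).card := by omega
      obtain ⟨a1, ha1, a2, ha2, h12⟩ := Finset.one_lt_card.mp h2
      rw [Finset.mem_filter, mem_neighborFinset] at ha1 ha2
      exact stepA3 hval g hno hnt ha1.2 ha2.2 h12 ha1.1.symm ha2.1.symm
    · -- k = 4 : at least three distinct fixed neighbours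
      have h3 : 2 < ((Γ.neighborFinset b).filter (fun v : V => g v = v)).card := by omega
      obtain ⟨a1, ha1, a2, ha2, a3, ha3, h12, h13, h23⟩ := Finset.two_lt_card.mp h3
      rw [Finset.mem_filter, mem_neighborFinset] at ha1 ha2 ha3
      exact stepA4 hval hat g hno hnt ha1.2 ha2.2 ha3.2 h12 h13 h23
        ha1.1.symm ha2.1.symm ha3.1.symm
  -- double counting
  have hcardN : ∀ v : V, (Γ.neighborFinset v).card = k := by
    intro v
    rw [neighborFinset_def, ← Set.ncard_eq_toFinset_card']
    exact hval v
  have h1 : ∀ v ∈ F, Γ.neighborFinset v = Fᶜ.filter (fun b => Γ.Adj v b) := by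
    intro v hv
    ext b
    rw [mem_neighborFinset, Finset.mem_filter, hmemFc]
    constructor
    · intro h
      exact ⟨fun hbf => hno v b h ⟨(hmemF v).mp hv, hbf⟩, h⟩
    · exact fun h => h.2
  have h2 : ∀ b : V, F.filter (fun v => Γ.Adj v b) =
      (Γ.neighborFinset b).filter (fun v : V => g v = v) := by
    intro b
    ext v
    simp only [Finset.mem_filter, Finset.mem_univ, true_and, mem_neighborFinset, hFdef,
      adj_comm]
    tauto
  have hcount : k * F.card ≤ (k - 2) * Fᶜ.card := by
    calc k * F.card = ∑ _v ∈ F, k := by rw [Finset.sum_const, smul_eq_mul, mul_comm]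
    _ = ∑ v ∈ F, (Fᶜ.filter (fun b => Γ.Adj v b)).card := by
        apply Finset.sum_congr rfl
        intro v hv
        rw [← h1 v hv, hcardN]
    _ = ∑ v ∈ F, ∑ b ∈ Fᶜ, if Γ.Adj v b then 1 else 0 := by
        apply Finset.sum_congr rfl
        intro v _
        rw [Finset.card_filter]
    _ = ∑ b ∈ Fᶜ, ∑ v ∈ F, if Γ.Adj v b then 1 else 0 := Finset.sum_comm
    _ = ∑ b ∈ Fᶜ, (F.filter (fun v => Γ.Adj v b)).card := by
        apply Finset.sum_congr rfl
        intro b _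
        rw [Finset.card_filter]
    _ ≤ ∑ b ∈ Fᶜ, (k - 2) := by
        apply Finset.sum_le_sum
        intro b hb
        rw [h2 b]
        exact hdb b ((hmemFc b).mp hb)
    _ = (k - 2) * Fᶜ.card := by rw [Finset.sum_const, smul_eq_mul, mul_comm]
  have hcompl : F.card + Fᶜ.card = Fintype.card V := Finset.card_add_card_compl F
  rcases hk with rfl | rfl <;> omega
private lemma iso_ncls {V : Type*} {Γ : SimpleGraph V} (e : Γ ≃g Γ) (x : V) :
    (fun v => e v) '' ncls Γ x = ncls Γ (e x) := by
  ext z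
  constructor
  · rintro ⟨y, hy, rfl⟩
    rw [mem_ncls] at hy ⊢
    rw [← iso_image_nbhd e y, ← iso_image_nbhd e x, hy]
  · intro hz
    refine ⟨e.symm z, ?_, by simp⟩
    rw [mem_ncls] at hz ⊢
    have := congrArg (fun S => (fun v => (e.symm v : V)) '' S) hz
    rw [iso_image_nbhd e.symm z, iso_image_nbhd e.symm (e x)] at this
    simpa using this

private lemma ncls_ncard_const {V : Type*} [Fintype V] {Γ : SimpleGraph V}
    (hvt : VertexTransitive Γ) (x y : V) : (ncls Γ x).ncard = (ncls Γ y).ncard := by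
  obtain ⟨e, he⟩ := hvt x y
  rw [← he, ← iso_ncls e x, Set.ncard_image_of_injective _ e.injective]

private lemma twin_all {V : Type*} [Fintype V] {Γ : SimpleGraph V}
    (hvt : VertexTransitive Γ) {a b : V} (hab : a ≠ b)
    (hN : Γ.neighborSet a = Γ.neighborSet b) (x : V) :
    ∃ y, y ≠ x ∧ y ∈ ncls Γ x := by
  obtain ⟨e, he⟩ := hvt a x
  refine ⟨e b, ?_, ?_⟩
  · intro h
    rw [← he] at h
    exact hab (e.injective h).symm
  · rw [← he, mem_ncls, ← iso_image_nbhd e b, ← iso_image_nbhd e a, hN]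

private lemma cb_structure {V : Type*} [Fintype V] {k : ℕ} {Γ : SimpleGraph V}
    (hconn : Γ.Connected) (hval : ∀ v : V, (Γ.neighborSet v).ncard = k) (hk : 2 ≤ k)
    (hsingle : ∀ x y : V, Γ.Adj x y → Γ.neighborSet x = ncls Γ y) :
    ∃ A B : Set V, (∀ u ∈ A, Γ.neighborSet u = B) ∧ (∀ u ∈ B, Γ.neighborSet u = A) ∧
      A ∩ B = ∅ ∧ A ∪ B = Set.univ ∧ A.ncard = k ∧ B.ncard = k := by
  have hx0 : Nonempty V := hconn.nonempty
  obtain ⟨x0⟩ := hx0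
  have hNne : (Γ.neighborSet x0).Nonempty := by
    rw [← Set.ncard_pos (Set.toFinite _), hval]; omega
  obtain ⟨y0, hy0⟩ := hNne
  have hadj : Γ.Adj x0 y0 := hy0
  refine ⟨ncls Γ x0, ncls Γ y0, ?_, ?_, ?_, ?_, ?_, ?_⟩
  · intro u hu
    rw [mem_ncls] at hu
    rw [hu]
    exact hsingle x0 y0 hadj
  · intro u hu
    rw [mem_ncls] at hu
    rw [hu]
    exact hsingle y0 x0 hadj.symm
  · ext z
    simp only [Set.mem_inter_iff, Set.mem_empty_iff_false, iff_false]
    rintro ⟨h1, h2⟩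
    rw [mem_ncls] at h1 h2
    have : Γ.neighborSet x0 = Γ.neighborSet y0 := by rw [← h1, h2]
    have hy : y0 ∈ Γ.neighborSet y0 := by rw [← this]; exact hy0
    exact Γ.irrefl hy
  · apply Set.eq_univ_of_forall
    intro v
    apply closure_eq_univ hconn (Set.mem_union_left _ (ncls_self Γ x0))
    intro x y hx hxy
    rcases hx with hx | hx
    · right
      rw [mem_ncls] at hx ⊢
      have : y ∈ Γ.neighborSet x := hxy
      rw [hx, hsingle x0 y0 hadj] at this
      rw [mem_ncls] at this
      exact this
    · left
      rw [mem_ncls] at hx ⊢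
      have : y ∈ Γ.neighborSet x := hxy
      rw [hx, hsingle y0 x0 hadj.symm] at this
      rw [mem_ncls] at this
      exact this
  · rw [← hsingle y0 x0 hadj.symm, hval]
  · rw [← hsingle x0 y0 hadj, hval]

private lemma px_adj (r : ℕ) (a b : ZMod r × (Fin 1 → ZMod 2)) :
    (praegerXu r 1).Adj a b ↔ a ≠ b ∧ (b.1 = a.1 + 1 ∨ a.1 = b.1 + 1) := by
  rw [praegerXu, fromRel_adj]
  constructor
  · rintro ⟨hne, h | h⟩
    · exact ⟨hne, Or.inl h.1⟩
    · exact ⟨hne, Or.inr h.1⟩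
  · rintro ⟨hne, h | h⟩
    · exact ⟨hne, Or.inl ⟨h, fun i hi => absurd hi (by omega)⟩⟩
    · exact ⟨hne, Or.inr ⟨h, fun i hi => absurd hi (by omega)⟩⟩
private lemma iso_K33 {V : Type*} [Fintype V] {Γ : SimpleGraph V} (A B : Set V)
    (hA : ∀ u ∈ A, Γ.neighborSet u = B) (hB : ∀ u ∈ B, Γ.neighborSet u = A)
    (hd : A ∩ B = ∅) (hu : A ∪ B = Set.univ) (hca : A.ncard = 3) (hcb : B.ncard = 3) :
    Nonempty (Γ ≃g completeBipartiteGraph (Fin 3) (Fin 3)) := by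
  have eA : ↥A ≃ Fin 3 := Finite.equivFinOfCardEq (by rw [Nat.card_coe_set_eq, hca])
  have eB : ↥B ≃ Fin 3 := Finite.equivFinOfCardEq (by rw [Nat.card_coe_set_eq, hcb])
  have hnAB : ∀ z : V, z ∈ A → z ∈ B → False := by
    intro z h1 h2
    have : z ∈ A ∩ B := ⟨h1, h2⟩
    rw [hd] at this
    exact this
  set ψ : Fin 3 ⊕ Fin 3 → V := Sum.elim (fun i => (eA.symm i : V)) (fun j => (eB.symm j : V))
    with hψ
  have hψA : ∀ i, ψ (Sum.inl i) ∈ A := fun i => (eA.symm i).2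
  have hψB : ∀ j, ψ (Sum.inr j) ∈ B := fun j => (eB.symm j).2
  have hbij : Function.Bijective ψ := by
    constructor
    · rintro (i | i) (j | j) h <;> simp only [hψ, Sum.elim_inl, Sum.elim_inr] at h
      · rw [Sum.inl.injEq]
        exact eA.symm.injective (Subtype.coe_injective h)
      · exfalso
        apply hnAB (eB.symm j : V) _ (eB.symm j).2
        rw [← h]
        exact (eA.symm i).2
      · exfalso
        apply hnAB (eA.symm j : V) (eA.symm j).2 _
        rw [← h]
        exact (eB.symm i).2
      · rw [Sum.inr.injEq]
        exact eB.symm.injective (Subtype.coe_injective h)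
    · intro v
      have : v ∈ A ∪ B := by rw [hu]; trivial
      rcases this with h | h
      · exact ⟨Sum.inl (eA ⟨v, h⟩), by simp [hψ]⟩
      · exact ⟨Sum.inr (eB ⟨v, h⟩), by simp [hψ]⟩
  have hadjAB : ∀ u w : V, u ∈ A → w ∈ B → Γ.Adj u w := by
    intro u w h1 h2
    have : w ∈ Γ.neighborSet u := by rw [hA u h1]; exact h2
    exact this
  have hnadjAA : ∀ u w : V, u ∈ A → w ∈ A → ¬Γ.Adj u w := by
    intro u w h1 h2 hadj
    have : w ∈ Γ.neighborSet u := hadj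
    rw [hA u h1] at this
    exact hnAB w h2 this
  have hnadjBB : ∀ u w : V, u ∈ B → w ∈ B → ¬Γ.Adj u w := by
    intro u w h1 h2 hadj
    have : w ∈ Γ.neighborSet u := hadj
    rw [hB u h1] at this
    exact hnAB w this h2
  refine ⟨RelIso.symm ⟨Equiv.ofBijective ψ hbij, ?_⟩⟩
  intro a b
  rcases a with i | i <;> rcases b with j | j <;>
      simp only [Equiv.ofBijective_apply, completeBipartiteGraph, Sum.isLeft_inl,
        Sum.isRight_inl, Sum.isLeft_inr, Sum.isRight_inr, and_self, false_and, and_false,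
        or_false, false_or, iff_true, iff_false]
  · exact iff_of_false (hnadjAA _ _ (hψA i) (hψA j)) (by simp)
  · exact iff_of_true (hadjAB _ _ (hψA i) (hψB j)) (by simp)
  · exact iff_of_true ((hadjAB _ _ (hψA j) (hψB i)).symm) (by simp)
  · exact iff_of_false (hnadjBB _ _ (hψB i) (hψB j)) (by simp)
private lemma zmod4_parity : ∀ x y : ZMod 4, (y = x + 1 ∨ x = y + 1) ↔ ¬(x.val % 2 = y.val % 2) := by
  decide

private lemma iso_K44 {V : Type*} [Fintype V] {Γ : SimpleGraph V} (A B : Set V)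
    (hA : ∀ u ∈ A, Γ.neighborSet u = B) (hB : ∀ u ∈ B, Γ.neighborSet u = A)
    (hd : A ∩ B = ∅) (hu : A ∪ B = Set.univ) (hca : A.ncard = 4) (hcb : B.ncard = 4) :
    Nonempty (Γ ≃g praegerXu 4 1) := by
  have eA : ↥A ≃ Fin 4 := Finite.equivFinOfCardEq (by rw [Nat.card_coe_set_eq, hca])
  have eB : ↥B ≃ Fin 4 := Finite.equivFinOfCardEq (by rw [Nat.card_coe_set_eq, hcb])
  have hnAB : ∀ z : V, z ∈ A → z ∈ B → False := by
    intro z h1 h2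
    have : z ∈ A ∩ B := ⟨h1, h2⟩
    rw [hd] at this
    exact this
  have hidx : ∀ p : ZMod 4 × (Fin 1 → ZMod 2), p.1.val / 2 * 2 + (p.2 0).val < 4 := by
    intro p
    have h1 : p.1.val < 4 := ZMod.val_lt p.1
    have h2 : (p.2 0).val < 2 := ZMod.val_lt (p.2 0)
    omega
  set idx : ZMod 4 × (Fin 1 → ZMod 2) → Fin 4 := fun p => ⟨p.1.val / 2 * 2 + (p.2 0).val, hidx p⟩
    with hidxdef
  set ψ : ZMod 4 × (Fin 1 → ZMod 2) → V := fun p =>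
    if p.1.val % 2 = 0 then (eA.symm (idx p) : V) else (eB.symm (idx p) : V) with hψ
  have hψmemA : ∀ p, p.1.val % 2 = 0 → ψ p ∈ A := by
    intro p hp
    rw [hψ]
    simp only [hp, if_pos]
    exact (eA.symm (idx p)).2
  have hψmemB : ∀ p, ¬(p.1.val % 2 = 0) → ψ p ∈ B := by
    intro p hp
    rw [hψ]
    simp only [hp, if_neg, if_false]
    exact (eB.symm (idx p)).2
  have hvalinj : ∀ x y : ZMod 4, x.val = y.val → x = y := by decide
  have hval2inj : ∀ x y : ZMod 2, x.val = y.val → x = y := by decide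
  have hpeq : ∀ p q : ZMod 4 × (Fin 1 → ZMod 2), p.1.val = q.1.val → (p.2 0).val = (q.2 0).val →
      p = q := by
    intro p q h1 h2
    refine Prod.ext (hvalinj _ _ h1) ?_
    funext x
    have : x = 0 := Subsingleton.elim x 0
    rw [this]
    exact hval2inj _ _ h2
  have hinj : Function.Injective ψ := by
    intro p q h
    by_cases hp : p.1.val % 2 = 0 <;> by_cases hq : q.1.val % 2 = 0
    · rw [hψ] at h
      simp only [hp, hq, if_pos] at h
      have := eA.symm.injective (Subtype.coe_injective h)
      rw [hidxdef] at this
      simp only [Fin.mk.injEq] at this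
      have h2 : (p.2 0).val < 2 := ZMod.val_lt (p.2 0)
      have h2' : (q.2 0).val < 2 := ZMod.val_lt (q.2 0)
      exact hpeq p q (by omega) (by omega)
    · exact absurd (hψmemA p hp) (fun hh => hnAB _ hh (h ▸ hψmemB q hq))
    · exact absurd (hψmemB p hp) (fun hh => hnAB _ (h ▸ hψmemA q hq) hh)
    · rw [hψ] at h
      simp only [hp, hq, if_neg, if_false] at h
      have := eB.symm.injective (Subtype.coe_injective h)
      rw [hidxdef] at this
      simp only [Fin.mk.injEq] at this
      have h2 : (p.2 0).val < 2 := ZMod.val_lt (p.2 0)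
      have h2' : (q.2 0).val < 2 := ZMod.val_lt (q.2 0)
      exact hpeq p q (by omega) (by omega)
  have hsurj : Function.Surjective ψ := by
    intro v
    have hv : v ∈ A ∪ B := by rw [hu]; trivial
    rcases hv with h | h
    · set i : Fin 4 := eA ⟨v, h⟩ with hi
      refine ⟨(((i.val / 2 * 2 : ℕ) : ZMod 4), fun _ => ((i.val % 2 : ℕ) : ZMod 2)), ?_⟩
      have hiv : i.val < 4 := i.2
      have hv1 : (((i.val / 2 * 2 : ℕ) : ZMod 4)).val = i.val / 2 * 2 :=
        ZMod.val_cast_of_lt (by omega)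
      have hv2 : (((i.val % 2 : ℕ) : ZMod 2)).val = i.val % 2 :=
        ZMod.val_cast_of_lt (by omega)
      have hpar : (((i.val / 2 * 2 : ℕ) : ZMod 4)).val % 2 = 0 := by rw [hv1]; omega
      rw [hψ]
      simp only [hpar, if_pos]
      have : idx (((i.val / 2 * 2 : ℕ) : ZMod 4), fun _ => ((i.val % 2 : ℕ) : ZMod 2)) = i := by
        rw [hidxdef]
        apply Fin.ext
        simp only [hv1, hv2]
        omega
      rw [this, hi]
      simp
    · set i : Fin 4 := eB ⟨v, h⟩ with hi
      refine ⟨(((i.val / 2 * 2 + 1 : ℕ) : ZMod 4), fun _ => ((i.val % 2 : ℕ) : ZMod 2)), ?_⟩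
      have hiv : i.val < 4 := i.2
      have hv1 : (((i.val / 2 * 2 + 1 : ℕ) : ZMod 4)).val = i.val / 2 * 2 + 1 :=
        ZMod.val_cast_of_lt (by omega)
      have hv2 : (((i.val % 2 : ℕ) : ZMod 2)).val = i.val % 2 :=
        ZMod.val_cast_of_lt (by omega)
      have hpar : ¬((((i.val / 2 * 2 + 1 : ℕ) : ZMod 4)).val % 2 = 0) := by rw [hv1]; omega
      rw [hψ]
      simp only [hpar, if_neg, if_false]
      have : idx (((i.val / 2 * 2 + 1 : ℕ) : ZMod 4), fun _ => ((i.val % 2 : ℕ) : ZMod 2)) = i := by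
        rw [hidxdef]
        apply Fin.ext
        simp only [hv1, hv2]
        omega
      rw [this, hi]
      simp
  have hadjAB : ∀ u w : V, u ∈ A → w ∈ B → Γ.Adj u w := by
    intro u w h1 h2
    have : w ∈ Γ.neighborSet u := by rw [hA u h1]; exact h2
    exact this
  have hnadj : ∀ u w : V, u ∈ A → w ∈ A → ¬Γ.Adj u w := by
    intro u w h1 h2 hadj
    have : w ∈ Γ.neighborSet u := hadj
    rw [hA u h1] at this
    exact hnAB w h2 this
  have hnadjB : ∀ u w : V, u ∈ B → w ∈ B → ¬Γ.Adj u w := by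
    intro u w h1 h2 hadj
    have : w ∈ Γ.neighborSet u := hadj
    rw [hB u h1] at this
    exact hnAB w this h2
  refine ⟨RelIso.symm ⟨Equiv.ofBijective ψ ⟨hinj, hsurj⟩, ?_⟩⟩
  intro p q
  change Γ.Adj (ψ p) (ψ q) ↔ _
  rw [px_adj]
  constructor
  · intro hadj
    have hpar : ¬(p.1.val % 2 = q.1.val % 2) := by
      intro hsame
      by_cases hp : p.1.val % 2 = 0
      · exact hnadj _ _ (hψmemA p hp) (hψmemA q (by omega)) hadj
      · exact hnadjB _ _ (hψmemB p hp) (hψmemB q (by omega)) hadj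
    refine ⟨?_, (zmod4_parity p.1 q.1).mpr hpar⟩
    intro hpq
    rw [hpq] at hpar
    exact hpar rfl
  · rintro ⟨-, hor⟩
    have hpar := (zmod4_parity p.1 q.1).mp hor
    by_cases hp : p.1.val % 2 = 0
    · exact hadjAB _ _ (hψmemA p hp) (hψmemB q (by omega))
    · exact (hadjAB _ _ (hψmemA q (by omega)) (hψmemB p hp)).symm
private lemma zmod2_cases : ∀ a : ZMod 2, a = 0 ∨ a = 1 := by decide

private lemma cycle_case {V : Type*} [Fintype V] {Γ : SimpleGraph V} (hconn : Γ.Connected)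
    (hval : ∀ v : V, (Γ.neighborSet v).ncard = 4)
    (hc2 : ∀ x : V, (ncls Γ x).ncard = 2) :
    ∃ r : ℕ, 3 ≤ r ∧ Nonempty (Γ ≃g praegerXu r 1) := by
  classical
  -- twin function
  have hpair : ∀ x : V, ∃ y, y ≠ x ∧ ncls Γ x = {x, y} := by
    intro x
    obtain ⟨a, b, hab, h⟩ := Set.ncard_eq_two.mp (hc2 x)
    have hx : x ∈ ncls Γ x := ncls_self Γ x
    rw [h] at hx
    rcases hx with rfl | rfl
    · exact ⟨b, hab.symm, h⟩
    · exact ⟨a, hab, by rw [h]; exact Set.pair_comm a x⟩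
  set T : V → V := fun x => (hpair x).choose with hTdef
  have hT : ∀ x : V, T x ≠ x ∧ ncls Γ x = {x, T x} := fun x => (hpair x).choose_spec
  -- splitting of neighbourhoods
  have hsplit : ∀ x y z : V, Γ.Adj x y → z ∈ Γ.neighborSet x → z ∉ ncls Γ y →
      Γ.neighborSet x = ncls Γ y ∪ ncls Γ z := by
    intro x y z hxy hz hzy
    have hsub : ncls Γ y ∪ ncls Γ z ⊆ Γ.neighborSet x :=
      Set.union_subset (ncls_subset_nbhd hxy) (ncls_subset_nbhd hz)
    have hdisj : Disjoint (ncls Γ y) (ncls Γ z) := by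
      rw [Set.disjoint_left]
      intro u hu1 hu2
      exact hzy (by rw [ncls_eq_of_common hu1 hu2]; exact ncls_self Γ z)
    have hcard : (ncls Γ y ∪ ncls Γ z).ncard = 4 := by
      rw [Set.ncard_union_eq hdisj (Set.toFinite _) (Set.toFinite _), hc2, hc2]
    exact (Set.eq_of_subset_of_ncard_le hsub (by rw [hcard, hval]) (Set.toFinite _)).symm
  -- the step of the walk
  have hstepex : ∀ x y : V, Γ.Adj x y → ∃ z, z ∈ Γ.neighborSet y ∧ z ∉ ncls Γ x := by
    intro x y hxy
    by_contra hcon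
    push_neg at hcon
    have hsub : Γ.neighborSet y ⊆ ncls Γ x := fun z hz => hcon z hz
    have := Set.ncard_le_ncard hsub (Set.toFinite _)
    rw [hval, hc2] at this
    omega
  set stepv : V → V → V := fun x y => if h : Γ.Adj x y then (hstepex x y h).choose else x
    with hstepvdef
  have hstepv : ∀ x y : V, (h : Γ.Adj x y) →
      stepv x y ∈ Γ.neighborSet y ∧ stepv x y ∉ ncls Γ x := by
    intro x y h
    rw [hstepvdef]
    simp only [dif_pos h]
    exact (hstepex x y h).choose_spec
  -- base point
  obtain ⟨x0⟩ := hconn.nonempty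
  have hNne : (Γ.neighborSet x0).Nonempty := by
    rw [← Set.ncard_pos (Set.toFinite _), hval]; omega
  obtain ⟨y0, hy0⟩ := hNne
  -- the walk
  set F : ℕ → V × V := fun n => Nat.rec (x0, y0) (fun _ p => (p.2, stepv p.1 p.2)) n with hFdef
  set f : ℕ → V := fun n => (F n).1 with hfdef
  have hFs : ∀ n, F (n + 1) = ((F n).2, stepv (F n).1 (F n).2) := fun n => rfl
  have hf0 : f 0 = x0 := rfl
  have hf1 : f 1 = y0 := rfl
  have hfs : ∀ n, f (n + 1) = (F n).2 := fun n => rfl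
  have hfrec : ∀ n, f (n + 2) = stepv (f n) (f (n + 1)) := fun n => rfl
  have hadjf : ∀ n, Γ.Adj (f n) (f (n + 1)) := by
    intro n
    induction n with
    | zero => exact hy0
    | succ m ih =>
      rw [hfrec m]
      exact (hstepv (f m) (f (m + 1)) ih).1
  have hnotf : ∀ n, f (n + 2) ∉ ncls Γ (f n) := by
    intro n
    rw [hfrec n]
    exact (hstepv (f n) (f (n + 1)) (hadjf n)).2
  have hNsplitf : ∀ n, Γ.neighborSet (f (n + 1)) = ncls Γ (f n) ∪ ncls Γ (f (n + 2)) := by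
    intro n
    refine hsplit (f (n + 1)) (f n) (f (n + 2)) (hadjf n).symm ?_ (hnotf n)
    rw [hfrec n]
    exact (hstepv (f n) (f (n + 1)) (hadjf n)).1
  set cls : ℕ → Set V := fun n => ncls Γ (f n) with hclsdef
  have hNeq : ∀ a b : ℕ, cls a = cls b → Γ.neighborSet (f a) = Γ.neighborSet (f b) := by
    intro a b h
    have : f a ∈ cls b := by rw [← h]; exact ncls_self Γ (f a)
    exact this
  have hmemN : ∀ (v : V) (n : ℕ), v ∈ cls n → Γ.neighborSet v = Γ.neighborSet (f n) :=
    fun v n h => h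
  have hcls_or : ∀ (v : V) (a b c : ℕ), v ∈ cls a → v ∈ ncls Γ (f b) ∪ ncls Γ (f c) →
      cls a = cls b ∨ cls a = cls c := by
    intro v a b c hv hmem
    rcases hmem with h | h
    · exact Or.inl (ncls_eq_of_common hv h)
    · exact Or.inr (ncls_eq_of_common hv h)
  have hadj_ne : ∀ n, cls n ≠ cls (n + 1) := by
    intro n h
    have h1 : f (n + 1) ∈ cls (n + 1) := ncls_self Γ _
    rw [← h] at h1
    have h2 : Γ.neighborSet (f (n + 1)) = Γ.neighborSet (f n) := h1
    have h3 : f (n + 1) ∈ Γ.neighborSet (f n) := hadjf n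
    rw [← h2] at h3
    exact Γ.irrefl h3
  have hadj_ne2 : ∀ n, cls n ≠ cls (n + 2) := by
    intro n h
    have h1 : f (n + 2) ∈ cls (n + 2) := ncls_self Γ _
    rw [← h] at h1
    exact hnotf n h1
  -- minimal period
  have hex : ∃ j : ℕ, ∃ i, i < j ∧ cls i = cls j := by
    obtain ⟨m1, m2, hne, heq⟩ := Finite.exists_ne_map_eq_of_infinite (fun n : ℕ => cls n)
    rcases lt_or_gt_of_ne hne with h | h
    · exact ⟨m2, m1, h, heq⟩
    · exact ⟨m1, m2, h, heq.symm⟩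
  set r : ℕ := Nat.find hex with hrdef
  obtain ⟨i, hir, hicls⟩ := Nat.find_spec hex
  rw [← hrdef] at hir hicls
  have hmin : ∀ j, j < r → ¬∃ i, i < j ∧ cls i = cls j := fun j hj => Nat.find_min hex hj
  have hi0 : i = 0 := by
    by_contra hi
    obtain ⟨l, rfl⟩ : ∃ l, i = l + 1 := ⟨i - 1, by omega⟩
    obtain ⟨m, hm⟩ : ∃ m, r = m + 1 := ⟨r - 1, by omega⟩
    have hne1 : r ≠ l + 2 := by
      intro h
      rw [h] at hicls
      exact hadj_ne (l + 1) hicls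
    have hne2 : r ≠ l + 3 := by
      intro h
      rw [h] at hicls
      exact hadj_ne2 (l + 1) hicls
    have hNr : Γ.neighborSet (f r) = Γ.neighborSet (f (l + 1)) := hNeq r (l + 1) hicls.symm
    rw [hm] at hNr
    rw [hNsplitf m, hNsplitf l] at hNr
    have hfm : f m ∈ ncls Γ (f l) ∪ ncls Γ (f (l + 2)) := by
      rw [← hNr]
      exact Or.inl (ncls_self Γ _)
    rcases hcls_or (f m) m l (l + 2) (ncls_self Γ _) hfm with h | h
    · -- cls m = cls l with l < m < r
      have hlm : l < m := by omega
      exact hmin m (by omega) ⟨l, hlm, h.symm⟩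
    · -- cls m = cls (l+2)
      have : l + 2 < m ∨ l + 2 = m ∨ l + 2 = m + 1 := by omega
      rcases this with hh | hh | hh
      · exact hmin m (by omega) ⟨l + 2, hh, h.symm⟩
      · exact hne1 (by omega)
      · exact hne2 (by omega)
  rw [hi0] at hicls
  have hr1 : r ≠ 1 := by
    intro h
    rw [h] at hicls
    exact hadj_ne 0 hicls
  have hr2 : r ≠ 2 := by
    intro h
    rw [h] at hicls
    exact hadj_ne2 0 hicls
  have hr3 : 3 ≤ r := by omega
  have hdist : ∀ a b : ℕ, a < b → b < r → cls a ≠ cls b := by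
    intro a b hab hbr h
    exact hmin b hbr ⟨a, hab, h⟩
  -- periodicity
  obtain ⟨m0, hm0⟩ : ∃ m, r = m + 1 := ⟨r - 1, by omega⟩
  have hper : ∀ n, cls (n + r) = cls n ∧ cls (n + 1 + r) = cls (n + 1) := by
    intro n
    induction n with
    | zero =>
      constructor
      · rw [Nat.zero_add]
        exact hicls.symm
      · -- cls (1 + r) = cls 1
        have hN0 : Γ.neighborSet (f r) = Γ.neighborSet (f 0) := hNeq r 0 hicls.symm
        have hsp : Γ.neighborSet (f r) = ncls Γ (f m0) ∪ ncls Γ (f (m0 + 2)) := by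
          rw [hm0]
          exact hNsplitf m0
        have hf1mem : f 1 ∈ ncls Γ (f m0) ∪ ncls Γ (f (m0 + 2)) := by
          rw [← hsp, hN0]
          exact hadjf 0
        rcases hcls_or (f 1) 1 m0 (m0 + 2) (ncls_self Γ _) hf1mem with h | h
        · -- cls 1 = cls m0, m0 = r - 1
          exfalso
          have : m0 = 0 ∨ m0 = 1 ∨ 1 < m0 := by omega
          rcases this with rfl | rfl | hlt
          · omega
          · omega
          · exact hdist 1 m0 hlt (by omega) h
        · rw [show 0 + 1 + r = m0 + 2 by omega]
          exact h.symm
    | succ n ih =>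
      obtain ⟨ih1, ih2⟩ := ih
      refine ⟨ih2, ?_⟩
      have hNn : Γ.neighborSet (f (n + 1 + r)) = Γ.neighborSet (f (n + 1)) := hNeq (n + 1 + r) (n + 1) ih2
      have hsp1 : Γ.neighborSet (f (n + r + 1)) = ncls Γ (f (n + r)) ∪ ncls Γ (f (n + r + 2)) :=
        hNsplitf (n + r)
      have hsp2 : Γ.neighborSet (f (n + 1)) = ncls Γ (f n) ∪ ncls Γ (f (n + 2)) := hNsplitf n
      rw [show n + 1 + r = n + r + 1 by omega] at hNn
      have hmem : f (n + r + 2) ∈ ncls Γ (f n) ∪ ncls Γ (f (n + 2)) := by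
        rw [← hsp2, ← hNn, hsp1]
        exact Or.inr (ncls_self Γ _)
      rcases hcls_or (f (n + r + 2)) (n + r + 2) n (n + 2) (ncls_self Γ _) hmem with h | h
      · exfalso
        have h1 : f (n + r + 2) ∈ cls (n + r + 2) := ncls_self Γ _
        rw [h, ← ih1] at h1
        exact hnotf (n + r) h1
      · rw [show n + 1 + 1 + r = n + r + 2 by omega, show n + 1 + 1 = n + 2 by omega]
        exact h
  have hperiodic : ∀ n, cls (n + r) = cls n := fun n => (hper n).1
  have hmod : ∀ n, cls n = cls (n % r) := by
    intro n
    induction n using Nat.strong_induction_on with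
    | _ n ih =>
      by_cases h : n < r
      · rw [Nat.mod_eq_of_lt h]
      · push_neg at h
        have h1 : n = (n - r) + r := by omega
        have h2 : cls n = cls (n - r) := by
          conv_lhs => rw [h1]
          exact hperiodic (n - r)
        rw [h2, ih (n - r) (by omega), Nat.mod_eq_sub_mod h]
  have hclsmod : ∀ a b : ℕ, a % r = b % r → cls a = cls b := by
    intro a b h
    rw [hmod a, hmod b, h]
  have hclsiff : ∀ a b : ℕ, cls a = cls b ↔ a % r = b % r := by
    intro a b
    refine ⟨?_, hclsmod a b⟩
    intro h
    by_contra hne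
    have ha : cls (a % r) = cls (b % r) := by rw [← hmod a, ← hmod b, h]
    have hra : a % r < r := Nat.mod_lt _ (by omega)
    have hrb : b % r < r := Nat.mod_lt _ (by omega)
    rcases lt_or_gt_of_ne hne with hlt | hlt
    · exact hdist _ _ hlt hrb ha
    · exact hdist _ _ hlt hra ha.symm
  -- all vertices are covered
  have hcover : ∀ v : V, ∃ n, n < r ∧ v ∈ cls n := by
    intro v
    have hS : v ∈ {u : V | ∃ n, u ∈ cls n} := by
      refine closure_eq_univ hconn (x0 := f 0) ?_ ?_ v
      · exact ⟨0, ncls_self Γ _⟩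
      intro x y hx hxy
      obtain ⟨n, hn⟩ := hx
      have hNx : Γ.neighborSet x = Γ.neighborSet (f n) := hmemN x n hn
      have hNn : Γ.neighborSet (f n) = Γ.neighborSet (f (n + r)) := hNeq n (n + r) (hperiodic n).symm
      obtain ⟨m1, hm1⟩ : ∃ m1, n + r = m1 + 1 := ⟨n + r - 1, by omega⟩
      have hy : y ∈ ncls Γ (f m1) ∪ ncls Γ (f (m1 + 2)) := by
        rw [← hNsplitf m1, ← hm1, ← hNn, ← hNx]
        exact hxy
      rcases hy with h | h
      · exact ⟨m1, h⟩
      · exact ⟨m1 + 2, h⟩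
    obtain ⟨n, hn⟩ := hS
    refine ⟨n % r, Nat.mod_lt _ (by omega), ?_⟩
    rw [← hmod n]
    exact hn
  -- build the isomorphism with praegerXu r 1
  haveI : NeZero r := ⟨by omega⟩
  have hcast : ∀ a b : ℕ, (a : ZMod r) = (b : ZMod r) ↔ a % r = b % r := by
    intro a b
    rw [ZMod.natCast_eq_natCast_iff]
    exact Iff.rfl
  have hTmem : ∀ x : V, T x ∈ ncls Γ x := by
    intro x
    rw [(hT x).2]
    exact Or.inr rfl
  set ψ : ZMod r × (Fin 1 → ZMod 2) → V := fun p =>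
    if p.2 0 = 0 then f p.1.val else T (f p.1.val) with hψ
  have hψmem : ∀ p, ψ p ∈ cls p.1.val := by
    intro p
    rw [hψ]
    by_cases h : p.2 0 = 0
    · simp only [h, if_pos]
      exact ncls_self Γ _
    · simp only [h, if_neg, if_false]
      exact hTmem _
  have hvalZ : ∀ x : ZMod r, ((x.val : ℕ) : ZMod r) = x := fun x => ZMod.natCast_rightInverse x
  have hinj : Function.Injective ψ := by
    intro p q h
    have hcc : cls p.1.val = cls q.1.val :=
      ncls_eq_of_common (hψmem p) (h ▸ hψmem q)
    have hvv : p.1.val % r = q.1.val % r := (hclsiff _ _).mp hcc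
    rw [Nat.mod_eq_of_lt (ZMod.val_lt p.1), Nat.mod_eq_of_lt (ZMod.val_lt q.1)] at hvv
    have h1 : p.1 = q.1 := by rw [← hvalZ p.1, ← hvalZ q.1, hvv]
    refine Prod.ext h1 ?_
    funext x
    have hx0 : x = 0 := Subsingleton.elim x 0
    rw [hx0]
    rw [hψ] at h
    simp only [h1] at h
    rcases zmod2_cases (p.2 0) with hp | hp <;> rcases zmod2_cases (q.2 0) with hq | hq <;>
      rw [hp, hq] <;> simp only [hp, hq, if_pos, if_neg, one_ne_zero, if_false] at h
    · exact absurd h.symm (hT (f q.1.val)).1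
    · exact absurd h (hT (f q.1.val)).1
  have hsurj : Function.Surjective ψ := by
    intro v
    obtain ⟨n, hnr, hn⟩ := hcover v
    have hval_n : ((n : ZMod r)).val = n := ZMod.val_cast_of_lt hnr
    have hn' : v ∈ ncls Γ (f n) := hn
    rw [(hT (f n)).2] at hn'
    rcases hn' with rfl | rfl
    · refine ⟨((n : ZMod r), fun _ => 0), ?_⟩
      rw [hψ]
      simp only [if_pos]
      rw [hval_n]
    · refine ⟨((n : ZMod r), fun _ => 1), ?_⟩
      rw [hψ]
      simp only [one_ne_zero, if_neg, if_false]
      rw [hval_n]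
  -- adjacency
  have hadjiff : ∀ p q : ZMod r × (Fin 1 → ZMod 2),
      Γ.Adj (ψ p) (ψ q) ↔ (q.1 = p.1 + 1 ∨ p.1 = q.1 + 1) := by
    intro p q
    set a : ℕ := p.1.val with hadef
    set b : ℕ := q.1.val with hbdef
    have hNa : Γ.neighborSet (ψ p) = Γ.neighborSet (f a) := hmemN _ _ (hψmem p)
    have hNb : Γ.neighborSet (ψ q) = Γ.neighborSet (f b) := hmemN _ _ (hψmem q)
    obtain ⟨m1, hm1⟩ : ∃ m1, a + r = m1 + 1 := ⟨a + r - 1, by omega⟩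
    have hm1r : ((m1 : ℕ) : ZMod r) = p.1 - 1 := by
      have : ((m1 + 1 : ℕ) : ZMod r) = ((a + r : ℕ) : ZMod r) := by rw [hm1]
      push_cast at this
      rw [ZMod.natCast_self, add_zero, hvalZ] at this
      linear_combination this
    constructor
    · intro hadj
      have hqmem : ψ q ∈ ncls Γ (f m1) ∪ ncls Γ (f (m1 + 2)) := by
        rw [← hNsplitf m1, ← hm1]
        have hNar : Γ.neighborSet (f a) = Γ.neighborSet (f (a + r)) :=
          hNeq a (a + r) (hperiodic a).symm
        rw [← hNar, ← hNa]
        exact hadj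
      have hor : cls b = cls m1 ∨ cls b = cls (m1 + 2) := hcls_or (ψ q) b m1 (m1 + 2) (hψmem q) hqmem
      rcases hor with h | h
      · right
        have := (hclsiff b m1).mp h
        have hZ : ((b : ℕ) : ZMod r) = ((m1 : ℕ) : ZMod r) := (hcast b m1).mpr this
        rw [hvalZ, hm1r] at hZ
        rw [hZ]
        ring
      · left
        have := (hclsiff b (m1 + 2)).mp h
        have hZ : ((b : ℕ) : ZMod r) = ((m1 + 2 : ℕ) : ZMod r) := (hcast b (m1 + 2)).mpr this
        push_cast at hZ
        rw [hvalZ, hm1r] at hZ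
        rw [hZ]
        ring
    · intro hor
      rcases hor with h | h
      · -- q.1 = p.1 + 1 : ψ q ∈ cls (a + 1)
        have hZ : ((b : ℕ) : ZMod r) = ((a + 1 : ℕ) : ZMod r) := by
          push_cast
          rw [hvalZ, hvalZ, h]
        have hbm : cls b = cls (a + 1) := hclsmod b (a + 1) ((hcast _ _).mp hZ)
        have hq : ψ q ∈ ncls Γ (f (a + 1)) := by
          have := hψmem q
          rw [hbm] at this
          exact this
        have : ψ q ∈ Γ.neighborSet (f a) := ncls_subset_nbhd (hadjf a) hq
        rw [← hNa] at this
        exact this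
      · have hZ : ((a : ℕ) : ZMod r) = ((b + 1 : ℕ) : ZMod r) := by
          push_cast
          rw [hvalZ, hvalZ, h]
        have hbm : cls a = cls (b + 1) := hclsmod a (b + 1) ((hcast _ _).mp hZ)
        have hq : ψ p ∈ ncls Γ (f (b + 1)) := by
          have := hψmem p
          rw [hbm] at this
          exact this
        have : ψ p ∈ Γ.neighborSet (f b) := ncls_subset_nbhd (hadjf b) hq
        rw [← hNb] at this
        exact this.symm
  refine ⟨r, hr3, ⟨RelIso.symm ⟨Equiv.ofBijective ψ ⟨hinj, hsurj⟩, ?_⟩⟩⟩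
  intro p q
  change Γ.Adj (ψ p) (ψ q) ↔ _
  rw [px_adj, hadjiff]
  constructor
  · intro h
    refine ⟨?_, h⟩
    intro hpq
    rw [hpq] at h
    rcases h with h | h <;>
    · have := congrArg (fun z : ZMod r => (z - q.1 : ZMod r)) h
      simp only [sub_self, add_sub_cancel_left] at this
      have h1 : ((1 : ℕ) : ZMod r) = ((0 : ℕ) : ZMod r) := by push_cast; rw [← this]
      have := (hcast 1 0).mp h1
      rw [Nat.mod_eq_of_lt (by omega), Nat.mod_eq_of_lt (by omega)] at this
      omega
  · exact fun h => h.2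


/-- Theorem 4.3: if a connected `k`-valent arc-transitive graph (`k ∈ {3,4}`) has a
non-identity automorphism `g` fixing no arc and more than 1/3 of the vertices, then
`k = 4` and `Γ ≅ C(r,1)`, or `k = 3` and `Γ ≅ K_{3,3}`. -/
theorem statement16 {V : Type*} [Fintype V] (k : ℕ) (hk : k = 3 ∨ k = 4)
    (Γ : SimpleGraph V) (hconn : Γ.Connected)
    (hval : ∀ v : V, Nat.card (Γ.neighborSet v) = k)
    (hat : ArcTransitive Γ)
    (g : Γ ≃g Γ) (hg : ∃ v, g v ≠ v) (hfpr : fpr (fun v => g v) > 1 / 3)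
    (hnoarc : ¬ ∃ u w : V, Γ.Adj u w ∧ g u = u ∧ g w = w) :
    (k = 4 ∧ ∃ r : ℕ, 3 ≤ r ∧ Nonempty (Γ ≃g praegerXu r 1)) ∨
      (k = 3 ∧ Nonempty (Γ ≃g completeBipartiteGraph (Fin 3) (Fin 3))) := by
  classical
  have hval' : ∀ v : V, (Γ.neighborSet v).ncard = k := by
    intro v
    rw [← Nat.card_coe_set_eq]
    exact hval v
  have hno : ∀ u w : V, Γ.Adj u w → ¬(g u = u ∧ g w = w) :=
    fun u w h hc => hnoarc ⟨u, w, h, hc.1, hc.2⟩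
  -- convert the fixed point ratio hypothesis
  have hne : Nonempty V := hconn.nonempty
  have hfprnat : Fintype.card V < 3 * Nat.card {v : V // g v = v} := by
    rw [fpr] at hfpr
    have hpos : (0 : ℚ) < (Nat.card V : ℚ) := by
      have : 0 < Nat.card V := Nat.card_pos
      exact_mod_cast this
    rw [gt_iff_lt, div_lt_div_iff₀ (by norm_num) hpos] at hfpr
    rw [one_mul] at hfpr
    have : (Nat.card V : ℚ) < 3 * (Nat.card {v : V // g v = v} : ℚ) := by
      rw [mul_comm] at hfpr
      exact_mod_cast hfpr
    rw [Nat.card_eq_fintype_card (α := V)] at this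
    exact_mod_cast this
  obtain ⟨x, y, hxy, hN⟩ := twins_exist hk hval' hat g hfprnat hno
  have hvt : VertexTransitive Γ := vt_of_at (by omega) hval hat
  have htwall : ∀ v : V, ∃ u, u ≠ v ∧ u ∈ ncls Γ v := twin_all hvt hxy hN
  have hc2lb : ∀ v : V, 2 ≤ (ncls Γ v).ncard := by
    intro v
    obtain ⟨u, hu1, hu2⟩ := htwall v
    exact (Set.one_lt_ncard_iff (Set.toFinite _)).mpr ⟨u, v, hu2, ncls_self Γ v, hu1⟩
  by_cases hsingle : ∀ a b : V, Γ.Adj a b → Γ.neighborSet a = ncls Γ b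
  · -- complete bipartite case
    obtain ⟨A, B, hA, hB, hd, hu, hca, hcb⟩ := cb_structure hconn hval' (by omega) hsingle
    rcases hk with rfl | rfl
    · exact Or.inr ⟨rfl, iso_K33 A B hA hB hd hu hca hcb⟩
    · exact Or.inl ⟨rfl, 4, by norm_num, iso_K44 A B hA hB hd hu hca hcb⟩
  · -- Praeger-Xu case
    push_neg at hsingle
    obtain ⟨a, b, hab, hNab⟩ := hsingle
    have hclsb : ncls Γ b ⊆ Γ.neighborSet a := ncls_subset_nbhd hab
    obtain ⟨z, hz, hzb⟩ := Set.exists_of_ssubset (HasSubset.Subset.ssubset_of_ne hclsb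
      (fun h => hNab h.symm))
    have hclsz : ncls Γ z ⊆ Γ.neighborSet a := ncls_subset_nbhd hz
    have hdisj : Disjoint (ncls Γ b) (ncls Γ z) := by
      rw [Set.disjoint_left]
      intro u hu1 hu2
      exact hzb (by rw [ncls_eq_of_common hu1 hu2]; exact ncls_self Γ z)
    have hsum : (ncls Γ b).ncard + (ncls Γ z).ncard ≤ k := by
      rw [← Set.ncard_union_eq hdisj (Set.toFinite _) (Set.toFinite _), ← hval' a]
      exact Set.ncard_le_ncard (Set.union_subset hclsb hclsz) (Set.toFinite _)
    have hk4 : k = 4 := by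
      have := hc2lb b
      have := hc2lb z
      rcases hk with rfl | rfl
      · omega
      · rfl
    have hb2 : (ncls Γ b).ncard = 2 := by
      have := hc2lb b
      have := hc2lb z
      omega
    have hc2 : ∀ v : V, (ncls Γ v).ncard = 2 := by
      intro v
      rw [ncls_ncard_const hvt v b]
      exact hb2
    have hval4 : ∀ v : V, (Γ.neighborSet v).ncard = 4 := by
      intro v
      rw [hval' v, hk4]
    obtain ⟨r, hr3, hiso⟩ := cycle_case hconn hval4 hc2
    exact Or.inl ⟨hk4, r, hr3, hiso⟩
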